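/- The set M_{t_i} = { x ∈ ℝ⁴ : x₁x₃ + αx₂x₄ = 0 and q_{t_i}(x) ≠ 0 } is a group under the generalized bicomplex product: it contains the identity e = (1,0,0,0), it is closed under the product, and every x ∈ M_{t_i} has inverse x⁻¹ = (1/q_{t_i}(x))·(x₁, −x₂, x₃, −x₄), which again lies in M_{t_i}. -/

import Mathlib

/-- The generalized bicomplex product on ℝ⁴ with parameters α, β. -/
def gbmul (α β : ℝ) (x y : ℝ × ℝ × ℝ × ℝ) : ℝ × ℝ × ℝ × ℝ :=
  (x.1 * y.1 - α * x.2.1 * y.2.1 - β * x.2.2.1 * y.2.2.1 + α * β * x.2.2.2 * y.2.2.2,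
   x.1 * y.2.1 + x.2.1 * y.1 - β * x.2.2.1 * y.2.2.2 - β * x.2.2.2 * y.2.2.1,
   x.1 * y.2.2.1 + x.2.2.1 * y.1 - α * x.2.1 * y.2.2.2 - α * x.2.2.2 * y.2.1,
   x.1 * y.2.2.2 + x.2.2.2 * y.1 + x.2.1 * y.2.2.1 + x.2.2.1 * y.2.1)

/-- The quadratic form associated with the conjugation. -/
def qTi (α β : ℝ) (x : ℝ × ℝ × ℝ × ℝ) : ℝ := x.1 ^ 2 + α * x.2.1 ^ 2 - β * x.2.2.1 ^ 2 - α * β * x.2.2.2 ^ 2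

/-- The hyperquadric is a group under the generalized bicomplex product: it
contains the identity `(1,0,0,0)`, is closed under the product, and every
element has a two-sided inverse (again lying in the hyperquadric) given by the
scaled conjugate. -/
theorem hyperquadric_group (α β : ℝ) :
    let M : Set (ℝ × ℝ × ℝ × ℝ) :=
      {x | x.1 * x.2.2.1 + α * x.2.1 * x.2.2.2 = 0 ∧ qTi α β x ≠ 0}
    let e : ℝ × ℝ × ℝ × ℝ := (1, 0, 0, 0)
    e ∈ M ∧
    (∀ x ∈ M, ∀ y ∈ M, gbmul α β x y ∈ M) ∧
    (∀ x ∈ M,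
      ((qTi α β x)⁻¹ • ((x.1, -x.2.1, x.2.2.1, -x.2.2.2) : ℝ × ℝ × ℝ × ℝ)) ∈ M ∧
      gbmul α β x ((qTi α β x)⁻¹ • ((x.1, -x.2.1, x.2.2.1, -x.2.2.2) : ℝ × ℝ × ℝ × ℝ)) = e ∧
      gbmul α β ((qTi α β x)⁻¹ • ((x.1, -x.2.1, x.2.2.1, -x.2.2.2) : ℝ × ℝ × ℝ × ℝ)) x = e) := by
  intro M e
  refine ⟨⟨by norm_num, by simp [qTi, e]⟩, ?_, ?_⟩
  · rintro ⟨x1, x2, x3, x4⟩ ⟨hx1, hx2⟩ ⟨y1, y2, y3, y4⟩ ⟨hy1, hy2⟩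
    simp only [Set.mem_setOf_eq, qTi] at hx1 hx2 hy1 hy2
    have key : (x1 * y1 - α * x2 * y2 - β * x3 * y3 + α * β * x4 * y4) ^ 2 +
        α * (x1 * y2 + x2 * y1 - β * x3 * y4 - β * x4 * y3) ^ 2 -
        β * (x1 * y3 + x3 * y1 - α * x2 * y4 - α * x4 * y2) ^ 2 -
        α * β * (x1 * y4 + x4 * y1 + x2 * y3 + x3 * y2) ^ 2 =
        (x1 ^ 2 + α * x2 ^ 2 - β * x3 ^ 2 - α * β * x4 ^ 2) *
        (y1 ^ 2 + α * y2 ^ 2 - β * y3 ^ 2 - α * β * y4 ^ 2) := by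
      linear_combination (-4 * β * (x1 * x3 + α * x2 * x4)) * hy1
    constructor
    · simp only [gbmul]
      linear_combination (x1 ^ 2 + α * x2 ^ 2 - β * x3 ^ 2 - α * β * x4 ^ 2) * hy1 +
        (y1 ^ 2 + α * y2 ^ 2 - β * y3 ^ 2 - α * β * y4 ^ 2) * hx1
    · intro h
      simp only [gbmul, qTi] at h
      exact mul_ne_zero hx2 hy2 (by rw [← key]; linear_combination h)
  · rintro ⟨x1, x2, x3, x4⟩ ⟨hx1, hx2⟩
    simp only [Set.mem_setOf_eq, qTi] at hx1 hx2
    have hq : qTi α β (x1, x2, x3, x4) = x1 ^ 2 + α * x2 ^ 2 - β * x3 ^ 2 - α * β * x4 ^ 2 := rfl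
    refine ⟨⟨?_, ?_⟩, ?_, ?_⟩
    · simp only [Set.mem_setOf_eq, hq, Prod.smul_mk, smul_eq_mul]
      field_simp
      linear_combination hx1
    · simp only [Set.mem_setOf_eq, hq, Prod.smul_mk, smul_eq_mul, qTi]
      intro h
      apply hx2
      field_simp at h
      linear_combination (x1 ^ 2 + α * x2 ^ 2 - β * x3 ^ 2 - α * β * x4 ^ 2) * h
    · show _ = ((1:ℝ), (0:ℝ), (0:ℝ), (0:ℝ))
      simp only [hq, Prod.smul_mk, smul_eq_mul, gbmul, Prod.mk.injEq]
      refine ⟨?_, ?_, ?_, ?_⟩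
      · field_simp; ring
      · field_simp; ring
      · field_simp; linear_combination 2 * hx1
      · field_simp; ring
    · show _ = ((1:ℝ), (0:ℝ), (0:ℝ), (0:ℝ))
      simp only [hq, Prod.smul_mk, smul_eq_mul, gbmul, Prod.mk.injEq]
      refine ⟨?_, ?_, ?_, ?_⟩
      · field_simp; ring
      · field_simp; ring
      · field_simp; linear_combination 2 * hx1
      · field_simp; ring
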